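/- For every pair (φ, ψ) of random families on a finite nonempty set I, the connectivity structure of their tensor product is the sum of their connectivity structures: K_{φ⊗ψ} = K_φ ⊕ K_ψ = [K_φ ∪ K_ψ]. -/

import Mathlib

universe u

variable {I : Type u}

/-- `{J₁, J₂}` is a dissociation of `J ⊆ I`: an (unordered) pair of nonempty
disjoint subsets whose union is `J`. -/
def IsDissociation (J J1 J2 : Set I) : Prop :=
  J1.Nonempty ∧ J2.Nonempty ∧ Disjoint J1 J2 ∧ J1 ∪ J2 = J

/-- `A` contests the dissociation `{J₁, J₂}`. -/
def Contests (A J1 J2 : Set I) : Prop :=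
  A ⊆ J1 ∪ J2 ∧ (A ∩ J1).Nonempty ∧ (A ∩ J2).Nonempty

/-- An integral connectivity structure on `I`. -/
def IsConnectivity (𝒦 : Set (Set I)) : Prop :=
  ∅ ∈ 𝒦 ∧ (∀ i : I, ({i} : Set I) ∈ 𝒦) ∧
    ∀ K L : Set I, K ∈ 𝒦 → L ∈ 𝒦 → (K ∩ L).Nonempty → K ∪ L ∈ 𝒦

/-- The integral connectivity structure generated by `𝒜`. -/
def generated (𝒜 : Set (Set I)) : Set (Set I) :=
  ⋂₀ {𝒦 : Set (Set I) | IsConnectivity 𝒦 ∧ 𝒜 ⊆ 𝒦}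

/-- The set `𝒦̃` of irreducible members of `𝒦` with at least two elements. -/
def irred (𝒦 : Set (Set I)) : Set (Set I) :=
  {K | K ∈ 𝒦 ∧ K ∉ generated (𝒦 \ {K}) ∧ 2 ≤ K.ncard}

/-- The sum of two integral connectivity structures: `𝒦₁ ⊕ 𝒦₂ = [𝒦₁ ∪ 𝒦₂]`. -/
def csum (𝒦₁ 𝒦₂ : Set (Set I)) : Set (Set I) := generated (𝒦₁ ∪ 𝒦₂)

/-- The discrete integral connectivity structure on `I`. -/
def discreteStructure (I : Type u) : Set (Set I) :=
  {(∅ : Set I)} ∪ {A : Set I | ∃ i : I, A = {i}}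

/-- `C` is a connected component of `(I, 𝒦)`: a maximal member of `𝒦`. -/
def IsComponent (𝒦 : Set (Set I)) (C : Set I) : Prop :=
  C ∈ 𝒦 ∧ ∀ K ∈ 𝒦, C ⊆ K → K = C

/-- `Γ_𝒜`: subsets of `I` all of whose dissociations are contested by a member of `𝒜`. -/
def Gamma (𝒜 : Set (Set I)) : Set (Set I) :=
  {B | ∀ J1 J2 : Set I, IsDissociation B J1 J2 → ∃ A ∈ 𝒜, Contests A J1 J2}

/-- A random family on `I`: a finite probability space together with finitely
valued random variables indexed by `I`. -/
structure RandomFamily (I : Type u) where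
  Ω : Type
  [fintΩ : Fintype Ω]
  P : Ω → ℝ
  P_nonneg : ∀ ω, 0 ≤ P ω
  P_total : ∑ ω, P ω = 1
  R : I → Type
  [fintR : ∀ i, Fintype (R i)]
  X : ∀ i, Ω → R i

attribute [instance] RandomFamily.fintΩ RandomFamily.fintR

/-- Probability of an event. -/
noncomputable def RandomFamily.prob (φ : RandomFamily I) (E : Set φ.Ω) : ℝ :=
  ∑ ω, E.indicator φ.P ω

/-- `P(X_J = x_J)`. -/
noncomputable def RandomFamily.probEq (φ : RandomFamily I) (J : Set I)
    (x : ∀ i, φ.R i) : ℝ :=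
  φ.prob {ω | ∀ j ∈ J, φ.X j ω = x j}

/-- `φ` respects the dissociation `{J₁, J₂}`:
`P(X_{J₁∪J₂} = x) = P(X_{J₁} = x) · P(X_{J₂} = x)` for all tuples of values. -/
def RandomFamily.Respects (φ : RandomFamily I) (J1 J2 : Set I) : Prop :=
  ∀ x : ∀ i, φ.R i, φ.probEq (J1 ∪ J2) x = φ.probEq J1 x * φ.probEq J2 x

/-- The connectivity structure `K_φ` of a random family: the subsets `J ⊆ I`
such that `φ` contests every dissociation of `J`. -/
def RandomFamily.Kconn (φ : RandomFamily I) : Set (Set I) :=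
  {J | ∀ J1 J2 : Set I, IsDissociation J J1 J2 → ¬ φ.Respects J1 J2}

/-- Tensor product of two random families. -/
noncomputable def RandomFamily.tensor (φ ψ : RandomFamily I) : RandomFamily I where
  Ω := φ.Ω × ψ.Ω
  fintΩ := inferInstance
  P := fun p => φ.P p.1 * ψ.P p.2
  P_nonneg := fun p => mul_nonneg (φ.P_nonneg _) (ψ.P_nonneg _)
  P_total := by
    rw [Fintype.sum_prod_type]
    simp only [← Finset.mul_sum]
    rw [ψ.P_total]
    simp only [mul_one]
    exact φ.P_total
  R := fun i => φ.R i × ψ.R i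
  fintR := fun i => inferInstance
  X := fun i p => (φ.X i p.1, ψ.X i p.2)

/-- Restriction of a random family to a subset `J ⊆ I`. -/
def RandomFamily.restrict (φ : RandomFamily I) (J : Set I) : RandomFamily J where
  Ω := φ.Ω
  fintΩ := inferInstance
  P := φ.P
  P_nonneg := φ.P_nonneg
  P_total := φ.P_total
  R := fun j => φ.R (j : I)
  fintR := fun j => inferInstance
  X := fun j => φ.X (j : I)

/-- The canonical `M`-brunnian family on `I`, for `M` of cardinality `m`
(with elements listed in increasing order). -/
noncomputable def brunnian [LinearOrder I] (M : Finset I) (m : ℕ) (h : M.card = m) :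
    RandomFamily I where
  Ω := Fin (m - 1) → ZMod 2
  fintΩ := inferInstance
  P := fun _ => ((2 : ℝ) ^ (m - 1))⁻¹
  P_nonneg := fun _ => by positivity
  P_total := by
    have hcard : Fintype.card (Fin (m - 1) → ZMod 2) = 2 ^ (m - 1) := by
      rw [Fintype.card_fun]
      simp
    rw [Finset.sum_const, Finset.card_univ, hcard, nsmul_eq_mul]
    push_cast
    exact mul_inv_cancel₀ (by positivity)
  R := fun _ => ZMod 2
  fintR := fun _ => inferInstance
  X := fun i ω =>
    if hi : i ∈ M then
      if hk : (((M.orderIsoOfFin h).symm ⟨i, hi⟩ : Fin m) : ℕ) < m - 1 then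
        ω ⟨_, hk⟩
      else ∑ j, ω j
    else 0

/-! ### Auxiliary development -/

namespace Stmt14Aux

open Finset

noncomputable def ind (p : Prop) : ℝ := by classical exact if p then 1 else 0

lemma ind_true {p : Prop} (h : p) : ind p = 1 := by simp [ind, h]
lemma ind_false {p : Prop} (h : ¬p) : ind p = 0 := by simp [ind, h]
lemma ind_nonneg (p : Prop) : 0 ≤ ind p := by
  unfold ind; split <;> norm_num
lemma ind_mul_ind (p q : Prop) : ind p * ind q = ind (p ∧ q) := by
  unfold ind
  by_cases hp : p <;> by_cases hq : q <;> simp [hp, hq]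
lemma ind_congr {p q : Prop} (h : p ↔ q) : ind p = ind q := by
  by_cases hp : p
  · rw [ind_true hp, ind_true (h.mp hp)]
  · rw [ind_false hp, ind_false (fun hq => hp (h.mpr hq))]

variable {I : Type u} [Fintype I]

lemma probEq_eq (φ : RandomFamily I) (S : Set I) (x : ∀ i, φ.R i) :
    φ.probEq S x = ∑ ω, ind (∀ j ∈ S, φ.X j ω = x j) * φ.P ω := by
  unfold RandomFamily.probEq RandomFamily.prob
  refine Finset.sum_congr rfl fun ω _ => ?_
  by_cases h : ∀ j ∈ S, φ.X j ω = x j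
  · rw [Set.indicator_of_mem (show ω ∈ {ω | ∀ j ∈ S, φ.X j ω = x j} from h),
      ind_true h, one_mul]
  · rw [Set.indicator_of_notMem (show ω ∉ {ω | ∀ j ∈ S, φ.X j ω = x j} from h),
      ind_false h, zero_mul]

lemma probEq_empty (φ : RandomFamily I) (x : ∀ i, φ.R i) :
    φ.probEq (∅ : Set I) x = 1 := by
  rw [probEq_eq]
  have : ∀ ω, ind (∀ j ∈ (∅ : Set I), φ.X j ω = x j) * φ.P ω = φ.P ω := by
    intro ω
    rw [ind_true (by simp), one_mul]
  simp only [this]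
  exact φ.P_total

lemma respects_empty_left (φ : RandomFamily I) (S : Set I) :
    φ.Respects ∅ S := by
  intro x
  rw [Set.empty_union, probEq_empty, one_mul]

lemma respects_empty_right (φ : RandomFamily I) (S : Set I) :
    φ.Respects S ∅ := by
  intro x
  rw [Set.union_empty, probEq_empty, mul_one]

lemma nonempty_Omega (φ : RandomFamily I) : Nonempty φ.Ω := by
  by_contra h
  rw [not_nonempty_iff] at h
  have := φ.P_total
  rw [Finset.univ_eq_empty, Finset.sum_empty] at this
  norm_num at this

lemma nonempty_R (φ : RandomFamily I) (i : I) : Nonempty (φ.R i) :=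
  (nonempty_Omega φ).elim fun ω => ⟨φ.X i ω⟩

/-- Number of extensions off `S`. -/
noncomputable def cc (φ : RandomFamily I) (S : Set I) : ℝ :=
  (Nat.card (∀ i : {i : I // i ∉ S}, φ.R i) : ℝ)

lemma cc_pos (φ : RandomFamily I) (S : Set I) : 0 < cc φ S := by
  have : Nonempty (∀ i : {i : I // i ∉ S}, φ.R i) :=
    ⟨fun i => (nonempty_R φ i.1).some⟩
  unfold cc
  exact_mod_cast (Nat.card_pos : 0 < Nat.card (∀ i : {i : I // i ∉ S}, φ.R i))

/-- Explicit equivalence for counting extensions. -/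
noncomputable def extEquiv (φ : RandomFamily I) (S : Set I) (g : ∀ i, φ.R i) :
    {y : ∀ i, φ.R i // ∀ j ∈ S, y j = g j} ≃ (∀ i : {i : I // i ∉ S}, φ.R i) := by
  classical
  exact
  { toFun := fun y i => y.1 i.1
    invFun := fun h =>
      ⟨fun i => if hi : i ∈ S then g i else h ⟨i, hi⟩, fun j hj => dif_pos hj⟩
    left_inv := fun y => by
      ext i
      dsimp only
      by_cases hi : i ∈ S
      · rw [dif_pos hi, y.2 i hi]
      · rw [dif_neg hi]
    right_inv := fun h => by
      funext i
      exact dif_neg i.2 }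

lemma sum_ind_ext [DecidableEq I] (φ : RandomFamily I) (S : Set I) (g : ∀ i, φ.R i) :
    ∑ y : ∀ i, φ.R i, ind (∀ j ∈ S, y j = g j) = cc φ S := by
  classical
  have h1 : ∑ y : ∀ i, φ.R i, ind (∀ j ∈ S, y j = g j)
      = ((Finset.univ.filter (fun y : ∀ i, φ.R i => ∀ j ∈ S, y j = g j)).card : ℝ) := by
    rw [Finset.card_filter]
    push_cast
    refine Finset.sum_congr rfl fun y _ => ?_
    by_cases h : ∀ j ∈ S, y j = g j
    · rw [ind_true h, if_pos h]
    · rw [ind_false h, if_neg h]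
  rw [h1]
  unfold cc
  norm_cast
  rw [← Fintype.card_subtype, ← Nat.card_eq_fintype_card]
  exact Nat.card_congr (extEquiv φ S g)

/-- Core counting/marginalization identity. -/
lemma core [DecidableEq I] (φ : RandomFamily I) {A S : Set I} (hA : A ⊆ S)
    {Ω' : Type} [Fintype Ω'] (W : Ω' → ℝ) (Z : ∀ i : I, Ω' → φ.R i) (x : ∀ i, φ.R i) :
    ∑ y : ∀ i, φ.R i, ind (∀ j ∈ A, y j = x j) *
        (∑ ω, ind (∀ j ∈ S, Z j ω = y j) * W ω)
      = cc φ S * ∑ ω, ind (∀ j ∈ A, Z j ω = x j) * W ω := by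
  simp_rw [Finset.mul_sum]
  rw [Finset.sum_comm]
  refine Finset.sum_congr rfl fun ω _ => ?_
  have key : ∀ y : ∀ i, φ.R i,
      ind (∀ j ∈ A, y j = x j) * (ind (∀ j ∈ S, Z j ω = y j) * W ω)
        = ind (∀ j ∈ S, y j = Z j ω) * (ind (∀ j ∈ A, Z j ω = x j) * W ω) := by
    intro y
    have e : ((∀ j ∈ A, y j = x j) ∧ (∀ j ∈ S, Z j ω = y j)) ↔
        ((∀ j ∈ S, y j = Z j ω) ∧ (∀ j ∈ A, Z j ω = x j)) := by
      constructor
      · rintro ⟨h1, h2⟩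
        exact ⟨fun j hj => (h2 j hj).symm, fun j hj => (h2 j (hA hj)).trans (h1 j hj)⟩
      · rintro ⟨h1, h2⟩
        exact ⟨fun j hj => (h1 j (hA hj)).trans (h2 j hj), fun j hj => (h1 j hj).symm⟩
    calc ind (∀ j ∈ A, y j = x j) * (ind (∀ j ∈ S, Z j ω = y j) * W ω)
        = ind ((∀ j ∈ A, y j = x j) ∧ (∀ j ∈ S, Z j ω = y j)) * W ω := by
          rw [← ind_mul_ind]; ring
      _ = ind ((∀ j ∈ S, y j = Z j ω) ∧ (∀ j ∈ A, Z j ω = x j)) * W ω := by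
          rw [ind_congr e]
      _ = ind (∀ j ∈ S, y j = Z j ω) * (ind (∀ j ∈ A, Z j ω = x j) * W ω) := by
          rw [← ind_mul_ind]; ring
  simp only [key]
  rw [← Finset.sum_mul, sum_ind_ext]

lemma sum_probEq_single [DecidableEq I] (φ : RandomFamily I) {A J : Set I} (hA : A ⊆ J)
    (x : ∀ i, φ.R i) :
    ∑ y : ∀ i, φ.R i, ind (∀ j ∈ A, y j = x j) * φ.probEq J y
      = cc φ J * φ.probEq A x := by
  simp only [probEq_eq]
  exact core φ hA φ.P φ.X x

open Classical in
lemma prod_split (φ : RandomFamily I) {J1 J2 : Set I} (hd : Disjoint J1 J2)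
    {U V : Set I} (hU : U ⊆ J1) (hV : V ⊆ J2) (f : ∀ i, φ.R i) (p : φ.Ω × φ.Ω) :
    (∀ j ∈ U ∪ V, (if j ∈ J1 then φ.X j p.1 else φ.X j p.2) = f j) ↔
      ((∀ j ∈ U, φ.X j p.1 = f j) ∧ (∀ j ∈ V, φ.X j p.2 = f j)) := by
  constructor
  · intro h
    refine ⟨fun j hj => ?_, fun j hj => ?_⟩
    · have := h j (Set.mem_union_left _ hj)
      rwa [if_pos (hU hj)] at this
    · have := h j (Set.mem_union_right _ hj)
      rwa [if_neg (Set.disjoint_right.mp hd (hV hj))] at this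
  · rintro ⟨h1, h2⟩ j hj
    rcases hj with hj | hj
    · rw [if_pos (hU hj)]; exact h1 j hj
    · rw [if_neg (Set.disjoint_right.mp hd (hV hj))]; exact h2 j hj

lemma sum_probEq_pair [DecidableEq I] (φ : RandomFamily I) {A B J1 J2 : Set I}
    (hd : Disjoint J1 J2) (hA : A ⊆ J1) (hB : B ⊆ J2) (x : ∀ i, φ.R i) :
    ∑ y : ∀ i, φ.R i, ind (∀ j ∈ A ∪ B, y j = x j) * (φ.probEq J1 y * φ.probEq J2 y)
      = cc φ (J1 ∪ J2) * (φ.probEq A x * φ.probEq B x) := by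
  classical
  have hcore := core φ (Set.union_subset_union hA hB)
    (fun p : φ.Ω × φ.Ω => φ.P p.1 * φ.P p.2)
    (fun i p => if i ∈ J1 then φ.X i p.1 else φ.X i p.2) x
  have e1 : ∀ y : ∀ i, φ.R i,
      (∑ p : φ.Ω × φ.Ω, ind (∀ j ∈ J1 ∪ J2, (if j ∈ J1 then φ.X j p.1 else φ.X j p.2) = y j)
          * (φ.P p.1 * φ.P p.2))
        = φ.probEq J1 y * φ.probEq J2 y := by
    intro y
    rw [probEq_eq, probEq_eq, Finset.sum_mul_sum, Fintype.sum_prod_type]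
    refine Finset.sum_congr rfl fun a _ => Finset.sum_congr rfl fun b _ => ?_
    rw [ind_congr (prod_split φ hd subset_rfl subset_rfl y (a, b)), ← ind_mul_ind]
    ring
  have e2 :
      (∑ p : φ.Ω × φ.Ω, ind (∀ j ∈ A ∪ B, (if j ∈ J1 then φ.X j p.1 else φ.X j p.2) = x j)
          * (φ.P p.1 * φ.P p.2))
        = φ.probEq A x * φ.probEq B x := by
    rw [probEq_eq, probEq_eq, Finset.sum_mul_sum, Fintype.sum_prod_type]
    refine Finset.sum_congr rfl fun a _ => Finset.sum_congr rfl fun b _ => ?_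
    rw [ind_congr (prod_split φ hd hA hB x (a, b)), ← ind_mul_ind]
    ring
  simp only [e1, e2] at hcore
  exact hcore

/-- A default tuple of values. -/
noncomputable def dflt (φ : RandomFamily I) : ∀ i, φ.R i :=
  fun i => (nonempty_R φ i).some

lemma sum_probEq_total [DecidableEq I] (φ : RandomFamily I) (J : Set I) :
    ∑ y : ∀ i, φ.R i, φ.probEq J y = cc φ J := by
  have h := sum_probEq_single φ (Set.empty_subset J) (dflt φ)
  simp only [probEq_empty, mul_one] at h
  rw [← h]
  refine Finset.sum_congr rfl fun y _ => ?_
  rw [ind_true (by simp), one_mul]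

lemma sum_probEq_mul [DecidableEq I] (φ : RandomFamily I) {J1 J2 : Set I}
    (hd : Disjoint J1 J2) :
    ∑ y : ∀ i, φ.R i, φ.probEq J1 y * φ.probEq J2 y = cc φ (J1 ∪ J2) := by
  have h := sum_probEq_pair φ hd (Set.empty_subset J1) (Set.empty_subset J2) (dflt φ)
  simp only [probEq_empty, mul_one, Set.empty_union] at h
  rw [← h]
  refine Finset.sum_congr rfl fun y _ => ?_
  rw [ind_true (by simp), one_mul]

/-- Marginalization: independence passes to sub-blocks. -/
lemma Respects.mono {φ : RandomFamily I} {J1 J2 A B : Set I}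
    (h : φ.Respects J1 J2) (hd : Disjoint J1 J2) (hA : A ⊆ J1) (hB : B ⊆ J2) :
    φ.Respects A B := by
  classical
  intro x
  have h1 : ∑ y : ∀ i, φ.R i, ind (∀ j ∈ A ∪ B, y j = x j) * φ.probEq (J1 ∪ J2) y
      = cc φ (J1 ∪ J2) * φ.probEq (A ∪ B) x :=
    sum_probEq_single φ (Set.union_subset_union hA hB) x
  have h2 := sum_probEq_pair φ hd hA hB x
  have h3 : ∀ y : ∀ i, φ.R i,
      ind (∀ j ∈ A ∪ B, y j = x j) * φ.probEq (J1 ∪ J2) y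
        = ind (∀ j ∈ A ∪ B, y j = x j) * (φ.probEq J1 y * φ.probEq J2 y) := by
    intro y; rw [h y]
  simp only [h3] at h1
  rw [h2] at h1
  exact mul_left_cancel₀ (ne_of_gt (cc_pos φ (J1 ∪ J2))) h1.symm

lemma tensor_probEq (φ ψ : RandomFamily I) (S : Set I) (z : ∀ i, (φ.tensor ψ).R i) :
    (φ.tensor ψ).probEq S z
      = φ.probEq S (fun i => (z i).1) * ψ.probEq S (fun i => (z i).2) := by
  rw [probEq_eq, probEq_eq, probEq_eq, Finset.sum_mul_sum]
  simp only [RandomFamily.tensor]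
  erw [Fintype.sum_prod_type]
  refine Finset.sum_congr rfl fun a _ => Finset.sum_congr rfl fun b _ => ?_
  have e : (∀ j ∈ S, (φ.X j a, ψ.X j b) = z j) ↔
      ((∀ j ∈ S, φ.X j a = (z j).1) ∧ (∀ j ∈ S, ψ.X j b = (z j).2)) := by
    constructor
    · intro h
      exact ⟨fun j hj => congrArg Prod.fst (h j hj), fun j hj => congrArg Prod.snd (h j hj)⟩
    · rintro ⟨h1, h2⟩ j hj
      exact Prod.ext_iff.mpr ⟨h1 j hj, h2 j hj⟩
  rw [ind_congr e, ← ind_mul_ind]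
  ring

lemma Respects.tensor {φ ψ : RandomFamily I} {J1 J2 : Set I}
    (hφ : φ.Respects J1 J2) (hψ : ψ.Respects J1 J2) :
    (φ.tensor ψ).Respects J1 J2 := by
  intro z
  rw [tensor_probEq, tensor_probEq, tensor_probEq, hφ, hψ]
  ring

lemma respects_left_of_tensor {φ ψ : RandomFamily I} {J1 J2 : Set I}
    (hd : Disjoint J1 J2) (h : (φ.tensor ψ).Respects J1 J2) : φ.Respects J1 J2 := by
  classical
  intro x
  have key : ∀ y : ∀ i, ψ.R i,
      φ.probEq (J1 ∪ J2) x * ψ.probEq (J1 ∪ J2) y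
        = φ.probEq J1 x * ψ.probEq J1 y * (φ.probEq J2 x * ψ.probEq J2 y) := by
    intro y
    have h0 := h (fun i => (x i, y i))
    erw [tensor_probEq φ ψ, tensor_probEq φ ψ, tensor_probEq φ ψ] at h0
    exact h0
  have h1 : φ.probEq (J1 ∪ J2) x * (∑ y : ∀ i, ψ.R i, ψ.probEq (J1 ∪ J2) y)
      = (φ.probEq J1 x * φ.probEq J2 x) * ∑ y : ∀ i, ψ.R i, ψ.probEq J1 y * ψ.probEq J2 y := by
    rw [Finset.mul_sum, Finset.mul_sum]
    refine Finset.sum_congr rfl fun y _ => ?_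
    rw [key y]; ring
  rw [sum_probEq_total, sum_probEq_mul ψ hd] at h1
  exact mul_right_cancel₀ (ne_of_gt (cc_pos ψ (J1 ∪ J2))) h1

lemma respects_right_of_tensor {φ ψ : RandomFamily I} {J1 J2 : Set I}
    (hd : Disjoint J1 J2) (h : (φ.tensor ψ).Respects J1 J2) : ψ.Respects J1 J2 := by
  classical
  intro x
  have key : ∀ y : ∀ i, φ.R i,
      φ.probEq (J1 ∪ J2) y * ψ.probEq (J1 ∪ J2) x
        = φ.probEq J1 y * ψ.probEq J1 x * (φ.probEq J2 y * ψ.probEq J2 x) := by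
    intro y
    have h0 := h (fun i => (y i, x i))
    erw [tensor_probEq φ ψ, tensor_probEq φ ψ, tensor_probEq φ ψ] at h0
    exact h0
  have h1 : (∑ y : ∀ i, φ.R i, φ.probEq (J1 ∪ J2) y) * ψ.probEq (J1 ∪ J2) x
      = (∑ y : ∀ i, φ.R i, φ.probEq J1 y * φ.probEq J2 y) * (ψ.probEq J1 x * ψ.probEq J2 x) := by
    rw [Finset.sum_mul, Finset.sum_mul]
    refine Finset.sum_congr rfl fun y _ => ?_
    rw [key y]; ring
  rw [sum_probEq_total, sum_probEq_mul φ hd] at h1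
  exact mul_left_cancel₀ (ne_of_gt (cc_pos φ (J1 ∪ J2))) h1

/-- Gluing independence along a respected dissociation. -/
lemma respects_glue {φ : RandomFamily I} {B1 B2 J1 J2 : Set I}
    (hB : Disjoint B1 B2) (hU : B1 ∪ B2 = J1 ∪ J2)
    (h : φ.Respects B1 B2) (h1 : φ.Respects (B1 ∩ J1) (B1 ∩ J2))
    (h2 : φ.Respects (B2 ∩ J1) (B2 ∩ J2)) : φ.Respects J1 J2 := by
  intro x
  have eB1 : (B1 ∩ J1) ∪ (B1 ∩ J2) = B1 := by
    rw [← Set.inter_union_distrib_left]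
    exact Set.inter_eq_left.mpr (hU ▸ Set.subset_union_left)
  have eB2 : (B2 ∩ J1) ∪ (B2 ∩ J2) = B2 := by
    rw [← Set.inter_union_distrib_left]
    exact Set.inter_eq_left.mpr (hU ▸ Set.subset_union_right)
  have eJ1 : (B1 ∩ J1) ∪ (B2 ∩ J1) = J1 := by
    rw [← Set.union_inter_distrib_right, hU]
    exact Set.inter_eq_right.mpr Set.subset_union_left
  have eJ2 : (B1 ∩ J2) ∪ (B2 ∩ J2) = J2 := by
    rw [← Set.union_inter_distrib_right, hU]
    exact Set.inter_eq_right.mpr Set.subset_union_right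
  have hr1 : φ.Respects (B1 ∩ J1) (B2 ∩ J1) :=
    Respects.mono h hB Set.inter_subset_left Set.inter_subset_left
  have hr2 : φ.Respects (B1 ∩ J2) (B2 ∩ J2) :=
    Respects.mono h hB Set.inter_subset_left Set.inter_subset_left
  have q1 := h1 x; rw [eB1] at q1
  have q2 := h2 x; rw [eB2] at q2
  have q3 := hr1 x; rw [eJ1] at q3
  have q4 := hr2 x; rw [eJ2] at q4
  have q := h x; rw [hU] at q
  rw [q, q1, q2, q3, q4]; ring

/-! ### Combinatorial part -/

lemma isConnectivity_generated (𝒜 : Set (Set I)) : IsConnectivity (generated 𝒜) := by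
  refine ⟨?_, ?_, ?_⟩
  · exact Set.mem_sInter.mpr fun 𝒦 h𝒦 => h𝒦.1.1
  · exact fun i => Set.mem_sInter.mpr fun 𝒦 h𝒦 => h𝒦.1.2.1 i
  · intro K L hK hL hne
    exact Set.mem_sInter.mpr fun 𝒦 h𝒦 =>
      h𝒦.1.2.2 K L (Set.mem_sInter.mp hK 𝒦 h𝒦) (Set.mem_sInter.mp hL 𝒦 h𝒦) hne

lemma subset_generated (𝒜 : Set (Set I)) : 𝒜 ⊆ generated 𝒜 :=
  fun _ hA => Set.mem_sInter.mpr fun _ h𝒦 => h𝒦.2 hA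

lemma generated_subset {𝒜 𝒦 : Set (Set I)} (h𝒦 : IsConnectivity 𝒦) (h : 𝒜 ⊆ 𝒦) :
    generated 𝒜 ⊆ 𝒦 :=
  fun _ hJ => Set.mem_sInter.mp hJ 𝒦 ⟨h𝒦, h⟩

lemma not_respects_helper {χ : RandomFamily I} {K J1 J2 : Set I}
    (hK : K ∈ χ.Kconn) (hsub : K ⊆ J1 ∪ J2) (h1 : (K ∩ J1).Nonempty)
    (h2 : (K ∩ J2).Nonempty) (hd : Disjoint J1 J2) (hresp : χ.Respects J1 J2) :
    False := by
  have hdis : IsDissociation K (K ∩ J1) (K ∩ J2) := by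
    refine ⟨h1, h2, hd.mono Set.inter_subset_right Set.inter_subset_right, ?_⟩
    rw [← Set.inter_union_distrib_left]
    exact Set.inter_eq_left.mpr hsub
  exact hK _ _ hdis (Respects.mono hresp hd Set.inter_subset_right Set.inter_subset_right)

lemma isConnectivity_Kconn (χ : RandomFamily I) : IsConnectivity χ.Kconn := by
  refine ⟨?_, ?_, ?_⟩
  · rintro J1 J2 ⟨⟨a, ha⟩, -, -, hU⟩ -
    have : a ∈ (∅ : Set I) := hU ▸ Set.mem_union_left _ ha
    exact absurd this (Set.notMem_empty a)
  · intro i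
    rintro J1 J2 ⟨⟨a, ha⟩, ⟨b, hb⟩, hd, hU⟩ -
    have ha' : a ∈ ({i} : Set I) := hU ▸ Set.mem_union_left _ ha
    have hb' : b ∈ ({i} : Set I) := hU ▸ Set.mem_union_right _ hb
    have : a = b := (Set.mem_singleton_iff.mp ha').trans (Set.mem_singleton_iff.mp hb').symm
    exact (Set.disjoint_left.mp hd ha) (this ▸ hb)
  · intro K L hK hL hKL
    rintro J1 J2 ⟨hn1, hn2, hd, hU⟩ hresp
    obtain ⟨x, hxK, hxL⟩ := hKL
    have hKsub : K ⊆ J1 ∪ J2 := by rw [hU]; exact Set.subset_union_left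
    have hLsub : L ⊆ J1 ∪ J2 := by rw [hU]; exact Set.subset_union_right
    by_cases k1 : (K ∩ J1).Nonempty
    · by_cases k2 : (K ∩ J2).Nonempty
      · exact not_respects_helper hK hKsub k1 k2 hd hresp
      · have hKJ1 : K ⊆ J1 := by
          intro a ha
          rcases hKsub ha with h | h
          · exact h
          · exact absurd ⟨a, ha, h⟩ k2
        have hL2 : (L ∩ J2).Nonempty := by
          obtain ⟨b, hb⟩ := hn2
          have hbKL : b ∈ K ∪ L := by rw [← hU]; exact Set.mem_union_right _ hb
          rcases hbKL with h | h
          · exact absurd hb (Set.disjoint_left.mp hd (hKJ1 h))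
          · exact ⟨b, h, hb⟩
        have hL1 : (L ∩ J1).Nonempty := ⟨x, hxL, hKJ1 hxK⟩
        exact not_respects_helper hL hLsub hL1 hL2 hd hresp
    · have hKJ2 : K ⊆ J2 := by
        intro a ha
        rcases hKsub ha with h | h
        · exact absurd ⟨a, ha, h⟩ k1
        · exact h
      have hL1 : (L ∩ J1).Nonempty := by
        obtain ⟨b, hb⟩ := hn1
        have hbKL : b ∈ K ∪ L := by rw [← hU]; exact Set.mem_union_left _ hb
        rcases hbKL with h | h
        · exact absurd (hKJ2 h) (Set.disjoint_left.mp hd hb)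
        · exact ⟨b, h, hb⟩
      have hL2 : (L ∩ J2).Nonempty := ⟨x, hxL, hKJ2 hxK⟩
      exact not_respects_helper hL hLsub hL1 hL2 hd hresp

lemma exists_contests_aux (φ : RandomFamily I) :
    ∀ n : ℕ, ∀ J1 J2 : Set I, (J1 ∪ J2).ncard ≤ n → J1.Nonempty → J2.Nonempty →
      Disjoint J1 J2 → ¬φ.Respects J1 J2 → ∃ A ∈ φ.Kconn, Contests A J1 J2 := by
  intro n
  induction n with
  | zero =>
    intro J1 J2 hn h1 _ _ _
    exfalso
    obtain ⟨a, ha⟩ := h1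
    have hne : (J1 ∪ J2).Nonempty := ⟨a, Set.mem_union_left _ ha⟩
    have := (Set.ncard_pos (Set.toFinite _)).mpr hne
    omega
  | succ n ih =>
    intro J1 J2 hn h1 h2 hd hresp
    by_cases hJ : (J1 ∪ J2) ∈ φ.Kconn
    · refine ⟨J1 ∪ J2, hJ, subset_rfl, ?_, ?_⟩
      · rwa [Set.union_inter_cancel_left]
      · rwa [Set.union_inter_cancel_right]
    · simp only [RandomFamily.Kconn, Set.mem_setOf_eq, not_forall, not_not] at hJ
      obtain ⟨B1, B2, hBdis, hBresp⟩ := hJ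
      obtain ⟨hBn1, hBn2, hBd, hBU⟩ := hBdis
      have main : ∀ B : Set I, B ⊆ J1 ∪ J2 → B.ncard ≤ n →
          ¬φ.Respects (B ∩ J1) (B ∩ J2) → ∃ A ∈ φ.Kconn, Contests A J1 J2 := by
        intro B hBsub hBcard hBr
        have hU' : (B ∩ J1) ∪ (B ∩ J2) = B := by
          rw [← Set.inter_union_distrib_left]
          exact Set.inter_eq_left.mpr hBsub
        have hne1 : (B ∩ J1).Nonempty := by
          by_contra hc
          rw [Set.not_nonempty_iff_eq_empty] at hc
          exact hBr (hc ▸ respects_empty_left φ (B ∩ J2))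
        have hne2 : (B ∩ J2).Nonempty := by
          by_contra hc
          rw [Set.not_nonempty_iff_eq_empty] at hc
          exact hBr (hc ▸ respects_empty_right φ (B ∩ J1))
        have hdd : Disjoint (B ∩ J1) (B ∩ J2) :=
          hd.mono Set.inter_subset_right Set.inter_subset_right
        have hcard : ((B ∩ J1) ∪ (B ∩ J2)).ncard ≤ n := by rw [hU']; exact hBcard
        obtain ⟨A, hA, hAsub, hA1, hA2⟩ := ih _ _ hcard hne1 hne2 hdd hBr
        refine ⟨A, hA, ?_, ?_, ?_⟩
        · exact hAsub.trans
            (Set.union_subset_union Set.inter_subset_right Set.inter_subset_right)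
        · exact hA1.mono (Set.inter_subset_inter subset_rfl Set.inter_subset_right)
        · exact hA2.mono (Set.inter_subset_inter subset_rfl Set.inter_subset_right)
      have hkey : ¬φ.Respects (B1 ∩ J1) (B1 ∩ J2) ∨ ¬φ.Respects (B2 ∩ J1) (B2 ∩ J2) := by
        by_contra hc
        push_neg at hc
        exact hresp (respects_glue hBd hBU hBresp hc.1 hc.2)
      have hfin : (J1 ∪ J2).Finite := Set.toFinite _
      have hcard1 : B1.ncard ≤ n := by
        have hss : B1 ⊂ J1 ∪ J2 := by
          refine (Set.ssubset_iff_of_subset (hBU ▸ Set.subset_union_left)).mpr ?_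
          obtain ⟨b, hb⟩ := hBn2
          exact ⟨b, hBU ▸ Set.mem_union_right _ hb, Set.disjoint_right.mp hBd hb⟩
        have := Set.ncard_lt_ncard hss hfin
        omega
      have hcard2 : B2.ncard ≤ n := by
        have hss : B2 ⊂ J1 ∪ J2 := by
          refine (Set.ssubset_iff_of_subset (hBU ▸ Set.subset_union_right)).mpr ?_
          obtain ⟨b, hb⟩ := hBn1
          exact ⟨b, hBU ▸ Set.mem_union_left _ hb, Set.disjoint_left.mp hBd hb⟩
        have := Set.ncard_lt_ncard hss hfin
        omega
      rcases hkey with h | h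
      · exact main B1 (hBU ▸ Set.subset_union_left) hcard1 h
      · exact main B2 (hBU ▸ Set.subset_union_right) hcard2 h

lemma exists_contests (φ : RandomFamily I) {J1 J2 : Set I} (h1 : J1.Nonempty)
    (h2 : J2.Nonempty) (hd : Disjoint J1 J2) (hresp : ¬φ.Respects J1 J2) :
    ∃ A ∈ φ.Kconn, Contests A J1 J2 :=
  exists_contests_aux φ (J1 ∪ J2).ncard J1 J2 le_rfl h1 h2 hd hresp

end Stmt14Aux
/-- `K_{φ⊗ψ} = K_φ ⊕ K_ψ = [K_φ ∪ K_ψ]`. -/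
theorem stmt14 {I : Type u} [Fintype I] [Nonempty I] (φ ψ : RandomFamily I) :
    (φ.tensor ψ).Kconn = csum φ.Kconn ψ.Kconn ∧
    (φ.tensor ψ).Kconn = generated (φ.Kconn ∪ ψ.Kconn) := by
  classical
  open Stmt14Aux in
  have E : (φ.tensor ψ).Kconn = generated (φ.Kconn ∪ ψ.Kconn) := by
    have hGconn := isConnectivity_generated (φ.Kconn ∪ ψ.Kconn)
    apply Set.Subset.antisymm
    · intro J hJ
      by_cases hJe : J = ∅
      · rw [hJe]; exact hGconn.1
      obtain ⟨j0, hj0⟩ := Set.nonempty_iff_ne_empty.mpr hJe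
      set G := generated (φ.Kconn ∪ ψ.Kconn) with hG
      set S := {K : Set I | K ∈ G ∧ K ⊆ J ∧ j0 ∈ K} with hS
      have hSne : S.Nonempty :=
        ⟨{j0}, hGconn.2.1 j0, Set.singleton_subset_iff.mpr hj0, rfl⟩
      obtain ⟨C, hCS, hCmax⟩ : ∃ C ∈ S, ∀ K ∈ S, id C ≤ id K → id C = id K := by
        obtain ⟨C, hC⟩ := Set.Finite.exists_maximal (Set.toFinite S) hSne
        exact ⟨C, hC.1, fun K hK hle => le_antisymm hle (hC.2 hK hle)⟩
      obtain ⟨hCG, hCJ, hjC⟩ := hCS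
      by_cases hCeq : C = J
      · rw [← hCeq]; exact hCG
      · exfalso
        have hDne : (J \ C).Nonempty :=
          Set.diff_nonempty.mpr fun h => hCeq (Set.Subset.antisymm hCJ h)
        have hDdj : Disjoint C (J \ C) := Set.disjoint_sdiff_right
        have hDU : C ∪ (J \ C) = J := Set.union_diff_cancel hCJ
        have hdis : IsDissociation J C (J \ C) := ⟨⟨j0, hjC⟩, hDne, hDdj, hDU⟩
        have hcon := hJ C (J \ C) hdis
        have hor : ¬φ.Respects C (J \ C) ∨ ¬ψ.Respects C (J \ C) := by
          by_contra hc
          push_neg at hc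
          exact hcon (Respects.tensor hc.1 hc.2)
        have getA : ∀ χ : RandomFamily I, χ.Kconn ⊆ φ.Kconn ∪ ψ.Kconn →
            ¬χ.Respects C (J \ C) → False := by
          intro χ hχ hr
          obtain ⟨A, hAK, hAsub, hA1, hA2⟩ := exists_contests χ ⟨j0, hjC⟩ hDne hDdj hr
          have hAJ : A ⊆ J := hAsub.trans (by rw [hDU])
          have hAG : A ∈ G := subset_generated _ (hχ hAK)
          have hCA : C ∪ A ∈ G := hGconn.2.2 C A hCG hAG (by
            obtain ⟨a, ha1, ha2⟩ := hA1
            exact ⟨a, ha2, ha1⟩)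
          have hCAS : C ∪ A ∈ S :=
            ⟨hCA, Set.union_subset hCJ hAJ, Set.mem_union_left _ hjC⟩
          have hEq : C = C ∪ A := hCmax _ hCAS Set.subset_union_left
          have hAC : A ⊆ C := by
            intro a ha
            rw [hEq]
            exact Set.mem_union_right _ ha
          obtain ⟨a, haA, haD⟩ := hA2
          exact haD.2 (hAC haA)
        rcases hor with h | h
        · exact getA φ Set.subset_union_left h
        · exact getA ψ Set.subset_union_right h
    · refine generated_subset (isConnectivity_Kconn _) ?_
      rintro K (hK | hK) <;> intro J1 J2 hdis hresp
      · exact hK J1 J2 hdis (respects_left_of_tensor hdis.2.2.1 hresp)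
      · exact hK J1 J2 hdis (respects_right_of_tensor hdis.2.2.1 hresp)
  exact ⟨E, E⟩
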